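/- The topological graph E(∞) contains no loops: there is no finite sequence of edges f₁,…,f_k in E(∞)¹ (k ≥ 1) with r(f_i) = s(f_{i+1}) for i < k and r(f_k) = s(f₁). Equivalently, no composition σ_{e₁} ∘ σ_{e₂} ∘ ⋯ ∘ σ_{e_k} of odometer maps (k ≥ 1) has a fixed point in Y. -/

import Mathlib

/-- A directed graph: vertices, edges, source and range maps. -/
structure DirGraph where
  V : Type
  E : Type
  s : E → V
  r : E → V

namespace DirGraph

/-- `G.IsPathFrom x l` : the list of edges `l` (in walking order) forms a
path starting at the vertex `x`. -/
def IsPathFrom (G : DirGraph) : G.V → List G.E → Prop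
  | _, [] => True
  | x, e :: es => G.s e = x ∧ G.IsPathFrom (G.r e) es

/-- The vertex reached after walking the edges `l` starting at `x`. -/
def endAt (G : DirGraph) : G.V → List G.E → G.V
  | x, [] => x
  | _, e :: es => G.endAt (G.r e) es

/-- A finite path in `G`: a source vertex together with a composable list of
edges (in walking order).  Vertices are the paths with no edges. -/
structure Path (G : DirGraph) where
  src : G.V
  edges : List G.E
  valid : G.IsPathFrom src edges

namespace Path

variable {G : DirGraph}

/-- The range (final vertex) of a path. -/
def rng (p : G.Path) : G.V := G.endAt p.src p.edges

/-- The length of a path. -/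
def length (p : G.Path) : ℕ := p.edges.length

/-- The trivial path at a vertex. -/
def nil (x : G.V) : G.Path := ⟨x, [], trivial⟩

end Path

variable {G : DirGraph}

theorem isPathFrom_append :
    ∀ (l₁ l₂ : List G.E) (x : G.V), G.IsPathFrom x l₁ →
      G.IsPathFrom (G.endAt x l₁) l₂ → G.IsPathFrom x (l₁ ++ l₂)
  | [], _, _, _, h₂ => h₂
  | e :: es, l₂, _, h₁, h₂ => ⟨h₁.1, isPathFrom_append es l₂ (G.r e) h₁.2 h₂⟩

theorem endAt_append :
    ∀ (l₁ l₂ : List G.E) (x : G.V), G.endAt x (l₁ ++ l₂) = G.endAt (G.endAt x l₁) l₂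
  | [], _, _ => rfl
  | e :: es, l₂, x => endAt_append es l₂ (G.r e)

theorem isPathFrom_take_drop :
    ∀ (l : List G.E) (k : ℕ) (x : G.V), G.IsPathFrom x l →
      G.IsPathFrom (G.endAt x (l.take k)) (l.drop k)
  | [], k, _, h => by cases k <;> exact h
  | _ :: _, 0, _, h => h
  | e :: es, k + 1, x, h => isPathFrom_take_drop es k (G.r e) h.2

/-- Extend a path by one more edge at its end (`p.cons e` is the path `e·p`). -/
def Path.cons (p : G.Path) (e : G.E) (h : G.s e = p.rng) : G.Path :=
  ⟨p.src, p.edges ++ [e], isPathFrom_append p.edges [e] p.src p.valid ⟨h, trivial⟩⟩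

@[simp] theorem Path.cons_length (p : G.Path) (e : G.E) (h : G.s e = p.rng) :
    (p.cons e h).length = p.length + 1 := by
  simp [Path.cons, Path.length]

/-- The remainder `w(n)` of a path modulo `n`: the final segment of length
`|w| % n` (the part of `w` walked last). -/
def Path.rem (p : G.Path) (n : ℕ) : G.Path :=
  ⟨G.endAt p.src (p.edges.take (p.length - p.length % n)),
   p.edges.drop (p.length - p.length % n),
   isPathFrom_take_drop p.edges _ p.src p.valid⟩

theorem Path.rem_length (p : G.Path) (n : ℕ) : (p.rem n).length = p.length % n := by
  show (p.edges.drop (p.length - p.length % n)).length = _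
  rw [List.length_drop]
  exact Nat.sub_sub_self (Nat.mod_le _ _)

theorem Path.rem_rng (p : G.Path) (n : ℕ) : (p.rem n).rng = p.rng := by
  show G.endAt (G.endAt p.src (p.edges.take (p.length - p.length % n)))
      (p.edges.drop (p.length - p.length % n)) = _
  rw [← endAt_append, List.take_append_drop]
  rfl

/-- The graph `E(n)`: vertices are paths of length `< n` in `G`, edges are
pairs `(e, w)` with `s(e) = r(w)`; `s(e,w) = w` and `r(e,w) = ew` if
`|w| < n - 1`, and `r(e,w) = r(e)` if `|w| = n - 1`. -/
def graphN (G : DirGraph) (n : ℕ) : DirGraph where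
  V := {w : G.Path // w.length < n}
  E := {p : G.E × G.Path // p.2.length < n ∧ G.s p.1 = p.2.rng}
  s := fun f => ⟨f.val.2, f.prop.1⟩
  r := fun f =>
    if h : f.val.2.length + 1 < n then
      ⟨f.val.2.cons f.val.1 f.prop.2, by simpa using h⟩
    else
      ⟨Path.nil (G.r f.val.1), by
        have := f.prop.1
        simp only [Path.nil, Path.length, List.length_nil]
        omega⟩

/-- A factor map between (finite) directed graphs. -/
structure FactorMap (F E : DirGraph) where
  m0 : F.V → E.V
  m1 : F.E → E.E
  src_eq : ∀ f, E.s (m1 f) = m0 (F.s f)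
  rng_eq : ∀ f, E.r (m1 f) = m0 (F.r f)
  lift : ∀ (e' : E.E) (v : F.V), E.s e' = m0 v →
    ∃! f : F.E, m1 f = e' ∧ F.s f = v

/-- The simple loop (cycle) digraph with `j` vertices. -/
def cyc (j : ℕ) : DirGraph where
  V := ZMod j
  E := ZMod j
  s := id
  r := fun i => i + 1

end DirGraph

namespace DirGraph

/-- `Xc G n i` is the (discrete) space `X_{i+1}` of paths in `G` of length
`< n (i+1)` whose length is divisible by `n i`. -/
abbrev Xc (G : DirGraph) (n : ℕ → ℕ) (i : ℕ) : Type :=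
  {w : G.Path // w.length < n (i + 1) ∧ n i ∣ w.length}

instance (G : DirGraph) (n : ℕ → ℕ) (i : ℕ) : TopologicalSpace (Xc G n i) := ⊥

instance (G : DirGraph) (n : ℕ → ℕ) (i : ℕ) : DiscreteTopology (Xc G n i) := ⟨rfl⟩

/-- `Yt G n` is the `{n_k}`-compactification `Y` of `E*`: the composable
sequences in `Π_i X_i`, with the product topology (each `X_i` discrete). -/
abbrev Yt (G : DirGraph) (n : ℕ → ℕ) : Type :=
  {y : ∀ i, Xc G n i // ∀ i, (y i).val.src = (y (i + 1)).val.rng}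

/-- The `i`-th coordinate path of an element of `Y`. -/
def yc {G : DirGraph} {n : ℕ → ℕ} (y : Yt G n) (i : ℕ) : G.Path := (y.val i).val

/-- The domain `D_e = { y ∈ Y : r(y₁) = s(e) }` of the odometer map `σ_e`. -/
def De (G : DirGraph) (n : ℕ → ℕ) (e : G.E) : Set (Yt G n) :=
  {y | (yc y 0).rng = G.s e}

/-- `Represents G n w y` says that `y ∈ Y` is the image `τ(w)` of the path
`w` under the canonical embedding: from some index `k` on the coordinates are
the trivial path at `s(w)`, and `w` is the concatenation `w₁ w₂ ⋯ w_k` of the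
first `k` coordinates (the `k`-th walked first). -/
def Represents (G : DirGraph) (n : ℕ → ℕ) (w : G.Path) (y : Yt G n) : Prop :=
  ∃ k : ℕ,
    (∀ i, k ≤ i → (yc y i).edges = [] ∧ (yc y i).src = w.src) ∧
    w.edges = (((List.range k).map fun i => (yc y i).edges).reverse).flatten

/-- `Carry G n e y z i0` : `z = σ_e(y)` where `i0 = i(y) < ∞` is the least
index with `|y_{i0}| < n_{i0+1} - n_{i0}`: the coordinates below `i0` of `z`
are the trivial path at `r(e)`, the `i0`-th is `e y₀ y₁ ⋯ y_{i0}`, and the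
coordinates above `i0` are unchanged. -/
def Carry (G : DirGraph) (n : ℕ → ℕ) (e : G.E) (y z : Yt G n) (i0 : ℕ) : Prop :=
  (yc y i0).length < n (i0 + 1) - n i0 ∧
  (∀ i < i0, ¬ (yc y i).length < n (i + 1) - n i) ∧
  (∀ i < i0, (yc z i).edges = [] ∧ (yc z i).src = G.r e) ∧
  (yc z i0).src = (yc y i0).src ∧
  (yc z i0).edges =
    (yc y i0).edges ++ (((List.range i0).map fun i => (yc y i).edges).reverse).flatten
      ++ [e] ∧
  ∀ i, i0 < i → yc z i = yc y i

/-- `OdRel G n e y z` : `z = σ_e(y)`, the graph of the odometer map `σ_e`: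
either there is a least index `i0 = i(y)` and a carry happens there, or all
coordinates of `y` are maximal and `z = (r(e), r(e), …)`. -/
def OdRel (G : DirGraph) (n : ℕ → ℕ) (e : G.E) (y z : Yt G n) : Prop :=
  (∃ i0, Carry G n e y z i0) ∨
  ((∀ i, ¬ (yc y i).length < n (i + 1) - n i) ∧
    ∀ i, (yc z i).edges = [] ∧ (yc z i).src = G.r e)

/-- A subset `B ⊆ Y` is invariant for the odometer maps `σ`. -/
def Invariant (G : DirGraph) (n : ℕ → ℕ) (σ : G.E → Yt G n → Yt G n)
    (B : Set (Yt G n)) : Prop :=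
  (∀ e : G.E, ∀ y ∈ B ∩ De G n e, σ e y ∈ B) ∧
  (∀ y : Yt G n, (∃ f : G.E, ∃ z ∈ De G n f ∩ B, σ f z = y) → y ∈ B)

end DirGraph


namespace Stmt17Aux

open DirGraph

variable {G : DirGraph} {n : ℕ → ℕ}

/-- Total length of the first `m+1` coordinates of `y`. -/
def Lm (m : ℕ) (y : Yt G n) : ℕ := ∑ i ∈ Finset.range (m + 1), (yc y i).length

lemma flatten_len (y : Yt G n) (k : ℕ) :
    ((((List.range k).map fun i => (yc y i).edges).reverse).flatten).length
      = ∑ i ∈ Finset.range k, (yc y i).length := by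
  induction k with
  | zero => simp
  | succ k ih =>
      rw [List.range_succ, Finset.sum_range_succ, ← ih]
      simp [DirGraph.Path.length]
      omega

lemma npos (h0 : n 0 = 1) (hmono : StrictMono n) (i : ℕ) : 1 ≤ n i :=
  h0 ▸ hmono.monotone (Nat.zero_le i)

lemma len_le (h0 : n 0 = 1) (hmono : StrictMono n) (hdvd : ∀ i, n i ∣ n (i + 1))
    (y : Yt G n) (i : ℕ) :
    (yc y i).length ≤ n (i + 1) - n i := by
  obtain ⟨hlt, a, ha⟩ := (y.val i).prop
  obtain ⟨b, hb⟩ := hdvd i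
  have hpos : 0 < n i := npos h0 hmono i
  have hab : a < b := by
    have : n i * a < n i * b := by
      rw [← ha, ← hb]; exact hlt
    exact Nat.lt_of_mul_lt_mul_left this
  have hle : n i * (a + 1) ≤ n i * b := Nat.mul_le_mul_left _ hab
  rw [Nat.mul_succ] at hle
  have ha' : (yc y i).length = n i * a := ha
  have hfin : (yc y i).length + n i ≤ n (i + 1) := by rw [ha', hb]; exact hle
  omega

lemma len_eq (h0 : n 0 = 1) (hmono : StrictMono n) (hdvd : ∀ i, n i ∣ n (i + 1))
    (y : Yt G n) (i : ℕ) (h : ¬ (yc y i).length < n (i + 1) - n i) :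
    (yc y i).length = n (i + 1) - n i :=
  le_antisymm (len_le h0 hmono hdvd y i) (le_of_not_gt h)

lemma max_sum (h0 : n 0 = 1) (hmono : StrictMono n) (hdvd : ∀ i, n i ∣ n (i + 1))
    (y : Yt G n) (m : ℕ) (h : ∀ i ≤ m, ¬ (yc y i).length < n (i + 1) - n i) :
    Lm m y = n (m + 1) - 1 := by
  induction m with
  | zero =>
      have := len_eq h0 hmono hdvd y 0 (h 0 le_rfl)
      simp [Lm, this, h0]
  | succ m ih =>
      have hmax := len_eq h0 hmono hdvd y (m + 1) (h (m + 1) le_rfl)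
      have hmono' : n (m + 1) ≤ n (m + 1 + 1) := (hmono (Nat.lt_succ_self (m + 1))).le
      have h1 : 1 ≤ n (m + 1) := npos h0 hmono (m + 1)
      rw [Lm, Finset.sum_range_succ, ← Lm, ih (fun i hi => h i (hi.trans (Nat.le_succ m))), hmax]
      omega

lemma step_mod (h0 : n 0 = 1) (hmono : StrictMono n) (hdvd : ∀ i, n i ∣ n (i + 1))
    {e : G.E} {y z : Yt G n} (hod : OdRel G n e y z) (m : ℕ) :
    Lm m z ≡ Lm m y + 1 [MOD n (m + 1)] := by
  rcases hod with ⟨i0, hi0lt, hmaxbelow, hzbelow, _, hzi0, habove⟩ | ⟨hall, hz⟩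
  · rcases le_or_gt i0 m with him | him
    · -- exact increment
      have key : Lm m z = Lm m y + 1 := by
        have hsplit : ∀ f : ℕ → ℕ, ∑ i ∈ Finset.range (m + 1), f i
            = (∑ i ∈ Finset.range i0, f i) + f i0
              + ∑ i ∈ Finset.Ico (i0 + 1) (m + 1), f i := by
          intro f
          rw [Finset.range_eq_Ico,
            ← Finset.sum_Ico_consecutive f (Nat.zero_le i0) (by omega : i0 ≤ m + 1),
            Finset.sum_eq_sum_Ico_succ_bot (by omega : i0 < m + 1),
            ← Finset.range_eq_Ico]
          ring
        have splitz : Lm m z = (∑ i ∈ Finset.range i0, (yc z i).length)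
            + (yc z i0).length + ∑ i ∈ Finset.Ico (i0 + 1) (m + 1), (yc z i).length :=
          hsplit _
        have splity : Lm m y = (∑ i ∈ Finset.range i0, (yc y i).length)
            + (yc y i0).length + ∑ i ∈ Finset.Ico (i0 + 1) (m + 1), (yc y i).length :=
          hsplit _
        have hz0 : ∑ i ∈ Finset.range i0, (yc z i).length = 0 := by
          apply Finset.sum_eq_zero
          intro i hi
          have := (hzbelow i (Finset.mem_range.mp hi)).1
          simp [DirGraph.Path.length, this]
        have hzi0len : (yc z i0).length
            = (yc y i0).length + (∑ i ∈ Finset.range i0, (yc y i).length) + 1 := by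
          show (yc z i0).edges.length = (yc y i0).edges.length + _ + 1
          rw [hzi0, List.length_append, List.length_append, flatten_len]
          simp [DirGraph.Path.length]
        have habove' : ∑ i ∈ Finset.Ico (i0 + 1) (m + 1), (yc z i).length
            = ∑ i ∈ Finset.Ico (i0 + 1) (m + 1), (yc y i).length := by
          apply Finset.sum_congr rfl
          intro i hi
          rw [habove i (Finset.mem_Ico.mp hi).1]
        rw [splitz, splity, hz0, hzi0len, habove']
        ring
      rw [key]
    · -- carry past m : y maximal up to m, z zero up to m
      have hy : Lm m y = n (m + 1) - 1 :=
        max_sum h0 hmono hdvd y m (fun i hi => hmaxbelow i (lt_of_le_of_lt hi him))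
      have hznil : Lm m z = 0 := by
        apply Finset.sum_eq_zero
        intro i hi
        have := (hzbelow i (lt_of_lt_of_le (Finset.mem_range.mp hi) him)).1
        simp [DirGraph.Path.length, this]
      have h1 : 1 ≤ n (m + 1) := npos h0 hmono (m + 1)
      rw [hznil, hy]
      have : n (m + 1) - 1 + 1 = n (m + 1) := by omega
      rw [this]
      exact (Nat.modEq_zero_iff_dvd.mpr dvd_rfl).symm
  · have hy : Lm m y = n (m + 1) - 1 := max_sum h0 hmono hdvd y m (fun i _ => hall i)
    have hznil : Lm m z = 0 := by
      apply Finset.sum_eq_zero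
      intro i _
      have := (hz i).1
      simp [DirGraph.Path.length, this]
    have h1 : 1 ≤ n (m + 1) := npos h0 hmono (m + 1)
    rw [hznil, hy]
    have : n (m + 1) - 1 + 1 = n (m + 1) := by omega
    rw [this]
    exact (Nat.modEq_zero_iff_dvd.mpr dvd_rfl).symm

lemma chain_mod (h0 : n 0 = 1) (hmono : StrictMono n) (hdvd : ∀ i, n i ∣ n (i + 1))
    (σ : G.E → Yt G n → Yt G n)
    (hσ : ∀ (e : G.E), ∀ y ∈ De G n e, OdRel G n e y (σ e y)) (m : ℕ) :
    ∀ (l : List (G.E × Yt G n)) (hne : l ≠ []),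
      (∀ p ∈ l, p.2 ∈ De G n p.1) →
      List.Chain' (fun p q => σ p.1 p.2 = q.2) l →
      Lm m (σ (l.getLast hne).1 (l.getLast hne).2)
        ≡ Lm m (l.head hne).2 + l.length [MOD n (m + 1)]
  | [], hne, _, _ => absurd rfl hne
  | [p], _, hDe, _ => by
      simpa using step_mod h0 hmono hdvd (hσ p.1 p.2 (hDe p (by simp))) m
  | p :: q :: t, _, hDe, hchain => by
      obtain ⟨hstep, hrest⟩ := List.isChain_cons_cons.mp hchain
      have ih := chain_mod h0 hmono hdvd σ hσ m (q :: t) (by simp)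
        (fun r hr => hDe r (List.mem_cons_of_mem p hr)) hrest
      have hlast : (p :: q :: t).getLast (by simp) = (q :: t).getLast (by simp) := by
        simp [List.getLast]
      rw [hlast]
      refine ih.trans ?_
      have hhead : (q :: t).head (by simp) = q := rfl
      rw [hhead, ← hstep]
      have h1 := step_mod h0 hmono hdvd (hσ p.1 p.2 (hDe p (by simp))) m
      calc Lm m (σ p.1 p.2) + (q :: t).length
          ≡ Lm m p.2 + 1 + (q :: t).length [MOD n (m + 1)] := h1.add_right _
        _ = Lm m ((p :: q :: t).head (by simp)).2 + (p :: q :: t).length := by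
            simp; ring

end Stmt17Aux

open DirGraph in
/-- The topological graph `E(∞)` has no loops: there is no
nonempty finite list of edges `(eᵢ, ωᵢ)` (with `ωᵢ ∈ D_{eᵢ}`) such that
`σ_{eᵢ}(ωᵢ) = ω_{i+1}` cyclically; equivalently no composition of odometer
maps has a fixed point in `Y`. -/
theorem stmt17 (G : DirGraph) [Fintype G.V] [Fintype G.E]
    (hnosource : ∀ v : G.V, ∃ e : G.E, G.r e = v)
    (hnosink : ∀ v : G.V, ∃ e : G.E, G.s e = v)
    (n : ℕ → ℕ) (h0 : n 0 = 1) (hmono : StrictMono n) (hdvd : ∀ i, n i ∣ n (i + 1))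
    (σ : G.E → Yt G n → Yt G n)
    (hσ : ∀ (e : G.E), ∀ y ∈ De G n e, OdRel G n e y (σ e y)) :
    ¬ ∃ l : List (G.E × Yt G n), l ≠ [] ∧
      (∀ p ∈ l, p.2 ∈ De G n p.1) ∧
      List.Chain' (fun p q => σ p.1 p.2 = q.2) l ∧
      (∀ p q, l.getLast? = some p → l.head? = some q → σ p.1 p.2 = q.2) := by
  rintro ⟨l, hne, hDe, hchain, hcyc⟩
  classical
  set k := l.length with hk
  have hk1 : 1 ≤ k := List.length_pos_iff.mpr hne
  -- the cyclic condition
  have hlast : l.getLast? = some (l.getLast hne) := List.getLast?_eq_getLast hne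
  have hhead : l.head? = some (l.head hne) := List.head?_eq_head hne
  have hcycle : σ (l.getLast hne).1 (l.getLast hne).2 = (l.head hne).2 :=
    hcyc _ _ hlast hhead
  have hdivall : ∀ m, n (m + 1) ∣ k := by
    intro m
    have h := Stmt17Aux.chain_mod h0 hmono hdvd σ hσ m l hne hDe hchain
    rw [hcycle] at h
    have h0k : 0 ≡ k [MOD n (m + 1)] :=
      Nat.ModEq.add_left_cancel' (Stmt17Aux.Lm m (l.head hne).2) (by simpa using h)
    exact Nat.modEq_zero_iff_dvd.mp h0k.symm
  -- n grows unboundedly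
  have hgrow : ∀ m, m + 1 ≤ n m := by
    intro m
    induction m with
    | zero => omega
    | succ m ih => have := hmono (show m < m + 1 by omega); omega
  have := Nat.le_of_dvd (by omega) (hdivall k)
  have := hgrow (k + 1)
  omega
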